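/- Hardy-type inequality near a degenerate endpoint: let a < R be real numbers and let k > 1. Then there exists a constant C > 0, depending only on a, R and k, such that for every continuously differentiable function F : [a, R] → ℝ one has ∫_a^R (R−y)^{k−2} F(y)² dy ≤ C ∫_a^R (R−y)^{k} (F(y)² + F′(y)²) dy. -/

import Mathlib

set_option maxHeartbeats 1000000


open Real Set

/-- Hardy-type inequality near the degenerate endpoint R: for k > 1 there is a constant C,
depending only on a, R, k, such that for every C¹ function F on [a, R],
∫_a^R (R−y)^{k−2} F² ≤ C ∫_a^R (R−y)^{k} (F² + F′²). -/
theorem stmt_5 (a R k : ℝ) (haR : a < R) (hk : 1 < k) :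
    ∃ C : ℝ, 0 < C ∧
      ∀ F F' : ℝ → ℝ,
        (∀ y ∈ Icc a R, HasDerivWithinAt F (F' y) (Icc a R) y) →
        ContinuousOn F' (Icc a R) →
        (∫ y in a..R, (R - y) ^ (k - 2) * F y ^ 2) ≤
          C * ∫ y in a..R, (R - y) ^ k * (F y ^ 2 + F' y ^ 2) := by
  have hk1 : (0:ℝ) < k - 1 := by linarith
  have hk0 : (0:ℝ) < k := by linarith
  set m : ℝ := (a + R) / 2 with hm
  have ham : a < m := by rw [hm]; linarith
  have hmR : m < R := by rw [hm]; linarith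
  have hcpos : (0:ℝ) < (R - m) ^ k := Real.rpow_pos_of_pos (by linarith) k
  set C₁ : ℝ := (1 + (m - a)) / ((m - a) * (R - m) ^ k) with hC₁
  have hC₁pos : 0 < C₁ := by
    rw [hC₁]
    have h1 : (0:ℝ) < m - a := by linarith
    positivity
  have hRa : (0:ℝ) < R - a := by linarith
  refine ⟨2/(k-1) * ((R - a) ^ (k-1) * C₁ + 2/(k-1)), by positivity, ?_⟩
  intro F F' hF hF'c
  -- continuity of F
  have hFc : ContinuousOn F (Icc a R) := fun y hy => (hF y hy).continuousWithinAt
  -- continuity of positive powers of (R - ·)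
  have hcont_pow : ∀ p : ℝ, 0 < p → Continuous fun y : ℝ => (R - y) ^ p := by
    intro p hp
    rw [continuous_iff_continuousAt]
    intro y
    exact (Real.continuousAt_rpow_const _ _ (Or.inr hp.le)).comp
      ((continuous_const.sub continuous_id).continuousAt)
  set I := ∫ y in a..R, (R - y) ^ (k - 2) * F y ^ 2 with hI
  set J := ∫ y in a..R, (R - y) ^ k * (F y ^ 2 + F' y ^ 2) with hJ
  -- integrability facts
  have hint1 : IntervalIntegrable (fun y => (R - y) ^ (k - 2)) MeasureTheory.volume a R := by
    have h0 := intervalIntegral.intervalIntegrable_rpow' (a := 0) (b := R - a)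
      (show (-1:ℝ) < k - 2 by linarith)
    have h1 := h0.comp_sub_left R
    simpa using h1.symm
  have hint2 : IntervalIntegrable (fun y => (R - y) ^ (k - 2) * F y ^ 2)
      MeasureTheory.volume a R := by
    apply hint1.mul_continuousOn
    rw [uIcc_of_le haR.le]
    exact hFc.pow 2
  have hintJ : IntervalIntegrable (fun y => (R - y) ^ k * (F y ^ 2 + F' y ^ 2))
      MeasureTheory.volume a R := by
    apply ContinuousOn.intervalIntegrable
    rw [uIcc_of_le haR.le]
    exact ((hcont_pow k hk0).continuousOn).mul ((hFc.pow 2).add (hF'c.pow 2))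
  have hintS : IntervalIntegrable (fun y => (R - y) ^ (k-1) * (2 * F y * F' y))
      MeasureTheory.volume a R := by
    apply ContinuousOn.intervalIntegrable
    rw [uIcc_of_le haR.le]
    exact ((hcont_pow (k-1) hk1).continuousOn).mul
      ((continuousOn_const.mul hFc).mul hF'c)
  -- derivative of F at interior points
  have hFd : ∀ x ∈ Ioo a R, HasDerivAt F (F' x) x := by
    intro x hx
    exact (hF x (Ioo_subset_Icc_self hx)).hasDerivAt (Icc_mem_nhds hx.1 hx.2)
  -- integration by parts identity
  have key : ∫ y in a..R,
      (-(k-1) * ((R - y) ^ (k-2) * F y ^ 2) + (R - y) ^ (k-1) * (2 * F y * F' y))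
      = 0 - (R - a) ^ (k-1) * F a ^ 2 := by
    have := intervalIntegral.integral_eq_sub_of_hasDeriv_right_of_le haR.le
      (f := fun y => (R - y) ^ (k-1) * F y ^ 2)
      (f' := fun y => -(k-1) * ((R - y) ^ (k-2) * F y ^ 2) + (R - y) ^ (k-1) * (2 * F y * F' y))
      (((hcont_pow (k-1) hk1).continuousOn).mul (hFc.pow 2))
      ?_ ?_
    · rw [this]
      have h0 : (R - R : ℝ) ^ (k-1) = 0 := by
        rw [sub_self]; exact Real.zero_rpow (by linarith)
      simp [h0, Real.zero_rpow (show k - 1 ≠ 0 by linarith)]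
    · intro x hx
      have hxR : (0:ℝ) < R - x := by linarith [hx.2]
      have h1 : HasDerivAt (fun y : ℝ => R - y) (-1) x := by
        simpa using (hasDerivAt_id x).const_sub R
      have h2 := (Real.hasDerivAt_rpow_const (x := R - x) (p := k - 1)
        (Or.inl (ne_of_gt hxR))).comp x h1
      have h3 : HasDerivAt (fun y : ℝ => F y ^ 2) (2 * F x * F' x) x := by
        have := (hFd x hx).fun_pow 2
        exact this.congr_deriv (by rw [show (2:ℕ) - 1 = 1 from rfl]; push_cast; ring)
      apply HasDerivAt.hasDerivWithinAt
      refine (h2.fun_mul h3).congr_deriv ?_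
      rw [show k - 1 - 1 = k - 2 from by ring]
      simp only [Function.comp_apply]
      ring
    · exact ((hint2.const_mul (-(k-1))).add hintS)
  -- split the IBP identity
  set S := ∫ y in a..R, (R - y) ^ (k-1) * (2 * F y * F' y) with hS
  have hkey2 : (k-1) * I = (R - a) ^ (k-1) * F a ^ 2 + S := by
    rw [intervalIntegral.integral_add (hint2.const_mul (-(k-1))) hintS,
      intervalIntegral.integral_const_mul] at key
    rw [hS, hI]
    linarith [key]
  -- AM-GM bound on S
  have hAM : S ≤ (k-1)/2 * I + 2/(k-1) * J := by
    have hmono : S ≤ ∫ y in a..R, ((k-1)/2 * ((R - y) ^ (k-2) * F y ^ 2)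
        + 2/(k-1) * ((R - y) ^ k * (F y ^ 2 + F' y ^ 2))) := by
      apply intervalIntegral.integral_mono_on haR.le hintS
        ((hint2.const_mul _).add (hintJ.const_mul _))
      intro y hy
      rcases eq_or_lt_of_le hy.2 with hyR | hyR
      · have h0 : (R - y : ℝ) = 0 := by rw [hyR]; ring
        rw [h0, Real.zero_rpow (show k - 1 ≠ 0 by linarith), zero_mul]
        have h2 : (0:ℝ) ≤ (0:ℝ) ^ (k-2) * F y ^ 2 :=
          mul_nonneg (Real.rpow_nonneg le_rfl _) (sq_nonneg _)
        have h3 : (0:ℝ) ≤ (0:ℝ) ^ k * (F y ^ 2 + F' y ^ 2) :=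
          mul_nonneg (Real.rpow_nonneg le_rfl _) (by positivity)
        have h4 := mul_nonneg (by linarith : (0:ℝ) ≤ (k-1)/2) h2
        have h5 := mul_nonneg (by positivity : (0:ℝ) ≤ 2/(k-1)) h3
        linarith
      · have ht : (0:ℝ) < R - y := by linarith
        have e1 : (R-y) ^ ((k-2)/2) * (R-y) ^ (k/2) = (R-y) ^ (k-1) := by
          rw [← Real.rpow_add ht]; congr 1; ring
        have e2 : (R-y) ^ ((k-2)/2) * (R-y) ^ ((k-2)/2) = (R-y) ^ (k-2) := by
          rw [← Real.rpow_add ht]; congr 1; ring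
        have e3 : (R-y) ^ (k/2) * (R-y) ^ (k/2) = (R-y) ^ k := by
          rw [← Real.rpow_add ht]; congr 1; ring
        have main := two_mul_le_add_sq ((k-1) * ((R-y) ^ ((k-2)/2) * F y))
          (2 * ((R-y) ^ (k/2) * F' y))
        have h7 : 4*(k-1)*(((R-y) ^ ((k-2)/2) * (R-y) ^ (k/2)) * (F y * F' y)) ≤
            (k-1)^2*(((R-y) ^ ((k-2)/2) * (R-y) ^ ((k-2)/2)) * F y ^ 2)
            + 4*(((R-y) ^ (k/2) * (R-y) ^ (k/2)) * F' y ^ 2) := by linarith [main]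
        rw [e1, e2, e3] at h7
        rw [← mul_le_mul_iff_right₀ (show (0:ℝ) < 2*(k-1) by linarith)]
        have h8 : (0:ℝ) ≤ (R-y) ^ k * F y ^ 2 :=
          mul_nonneg (Real.rpow_nonneg ht.le _) (sq_nonneg _)
        have h10 : 2*(k-1)*(2/(k-1)*((R-y) ^ k *(F y ^ 2 + F' y ^ 2)))
            = 4*((R-y) ^ k * (F y ^ 2 + F' y ^ 2)) := by
          field_simp; ring
        linarith [h7, h8, h10]
    have heq : (∫ y in a..R, ((k-1)/2 * ((R - y) ^ (k-2) * F y ^ 2)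
        + 2/(k-1) * ((R - y) ^ k * (F y ^ 2 + F' y ^ 2))))
        = (k-1)/2 * I + 2/(k-1) * J := by
      rw [intervalIntegral.integral_add (hint2.const_mul _) (hintJ.const_mul _),
        intervalIntegral.integral_const_mul, intervalIntegral.integral_const_mul, hI, hJ]
    rw [hS]
    rw [heq] at hmono
    exact hmono
  -- local integral near a
  set K := ∫ y in a..m, (F y ^ 2 + F' y ^ 2) with hK
  have hsub : Icc a m ⊆ Icc a R := Icc_subset_Icc le_rfl hmR.le
  have hintK2 : IntervalIntegrable (fun y => F y ^ 2 + F' y ^ 2) MeasureTheory.volume a m := by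
    apply ContinuousOn.intervalIntegrable
    rw [uIcc_of_le ham.le]
    exact ((hFc.mono hsub).pow 2).add ((hF'c.mono hsub).pow 2)
  have hKnonneg : (0:ℝ) ≤ K := by
    rw [hK]
    apply intervalIntegral.integral_nonneg ham.le
    intro y _; positivity
  have hKJ : (R - m) ^ k * K ≤ J := by
    have h1 : (R - m) ^ k * K = ∫ y in a..m, (R - m) ^ k * (F y ^ 2 + F' y ^ 2) := by
      rw [hK, intervalIntegral.integral_const_mul]
    have hint3 : IntervalIntegrable (fun y => (R - y) ^ k * (F y ^ 2 + F' y ^ 2))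
        MeasureTheory.volume a m := by
      apply ContinuousOn.intervalIntegrable
      rw [uIcc_of_le ham.le]
      exact ((hcont_pow k hk0).continuousOn).mul
        (((hFc.mono hsub).pow 2).add ((hF'c.mono hsub).pow 2))
    have h2 : (∫ y in a..m, (R - m) ^ k * (F y ^ 2 + F' y ^ 2))
        ≤ ∫ y in a..m, (R - y) ^ k * (F y ^ 2 + F' y ^ 2) := by
      apply intervalIntegral.integral_mono_on ham.le (hintK2.const_mul _) hint3
      intro y hy
      have hbase : (R - m) ^ k ≤ (R - y) ^ k :=
        Real.rpow_le_rpow (by linarith) (by linarith [hy.2]) hk0.le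
      exact mul_le_mul_of_nonneg_right hbase (by positivity)
    have h3 : (∫ y in a..m, (R - y) ^ k * (F y ^ 2 + F' y ^ 2)) ≤ J := by
      rw [hJ]
      apply intervalIntegral.integral_mono_interval le_rfl ham.le hmR.le ?_ hintJ
      apply (MeasureTheory.ae_restrict_iff' measurableSet_Ioc).2
      apply MeasureTheory.ae_of_all
      intro y hy
      exact mul_nonneg (Real.rpow_nonneg (by linarith [hy.2]) _) (by positivity)
    linarith
  -- bound F a ^ 2
  have hFa : F a ^ 2 * (m - a) ≤ (1 + (m - a)) * K := by
    have hpt : ∀ y ∈ Icc a m, F a ^ 2 - K ≤ F y ^ 2 := by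
      intro y hy
      have hy' : Icc a y ⊆ Icc a R := Icc_subset_Icc le_rfl (by linarith [hy.2])
      have hftc : ∫ t in a..y, (2 * F t * F' t) = F y ^ 2 - F a ^ 2 := by
        apply intervalIntegral.integral_eq_sub_of_hasDeriv_right_of_le hy.1
          ((hFc.mono hy').pow 2) ?_ ?_
        · intro x hx
          have hxIoo : x ∈ Ioo a R := ⟨hx.1, by linarith [hx.2, hy.2]⟩
          have h3 : HasDerivAt (fun t => F t ^ 2) (2 * F x * F' x) x := by
            have := (hFd x hxIoo).fun_pow 2
            exact this.congr_deriv (by rw [show (2:ℕ) - 1 = 1 from rfl]; push_cast; ring)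
          exact h3.hasDerivWithinAt
        · apply ContinuousOn.intervalIntegrable
          rw [uIcc_of_le hy.1]
          exact (continuousOn_const.mul (hFc.mono hy')).mul (hF'c.mono hy')
      have hintc : IntervalIntegrable (fun t => -(2 * F t * F' t))
          MeasureTheory.volume a y := by
        apply ContinuousOn.intervalIntegrable
        rw [uIcc_of_le hy.1]
        exact ((continuousOn_const.mul (hFc.mono hy')).mul (hF'c.mono hy')).neg
      have hintd : IntervalIntegrable (fun t => F t ^ 2 + F' t ^ 2)
          MeasureTheory.volume a y := by
        apply ContinuousOn.intervalIntegrable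
        rw [uIcc_of_le hy.1]
        exact ((hFc.mono hy').pow 2).add ((hF'c.mono hy').pow 2)
      have hle1 : (∫ t in a..y, -(2 * F t * F' t)) ≤ ∫ t in a..y, (F t ^ 2 + F' t ^ 2) := by
        apply intervalIntegral.integral_mono_on hy.1 hintc hintd
        intro t _
        nlinarith [sq_nonneg (F t + F' t)]
      have hle2 : (∫ t in a..y, (F t ^ 2 + F' t ^ 2)) ≤ K := by
        rw [hK]
        apply intervalIntegral.integral_mono_interval le_rfl hy.1 hy.2 ?_ hintK2
        apply (MeasureTheory.ae_restrict_iff' measurableSet_Ioc).2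
        apply MeasureTheory.ae_of_all
        intro t _; positivity
      have hneg : (∫ t in a..y, -(2 * F t * F' t)) = -(F y ^ 2 - F a ^ 2) := by
        rw [intervalIntegral.integral_neg, hftc]
      rw [hneg] at hle1
      linarith
    have hintF2 : IntervalIntegrable (fun y => F y ^ 2) MeasureTheory.volume a m := by
      apply ContinuousOn.intervalIntegrable
      rw [uIcc_of_le ham.le]
      exact (hFc.mono hsub).pow 2
    have hmono2 := intervalIntegral.integral_mono_on ham.le
      (intervalIntegrable_const (c := F a ^ 2 - K)) hintF2 hpt
    rw [intervalIntegral.integral_const, smul_eq_mul] at hmono2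
    have hmono3 : (∫ y in a..m, F y ^ 2) ≤ K := by
      rw [hK]
      apply intervalIntegral.integral_mono_on ham.le hintF2 hintK2
      intro y _
      nlinarith [sq_nonneg (F' y)]
    linarith
  have hFaJ : F a ^ 2 ≤ C₁ * J := by
    have hma : (0:ℝ) < m - a := by linarith
    have hKJ' : K ≤ J / (R - m) ^ k := by
      rw [le_div_iff₀ hcpos]
      linarith [hKJ]
    have h5 : F a ^ 2 ≤ (1 + (m - a)) * (J / (R - m) ^ k) / (m - a) := by
      rw [le_div_iff₀ hma]
      have h6 := mul_le_mul_of_nonneg_left hKJ' (by linarith : (0:ℝ) ≤ 1 + (m - a))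
      linarith
    calc F a ^ 2 ≤ (1 + (m - a)) * (J / (R - m) ^ k) / (m - a) := h5
      _ = C₁ * J := by
          have hne1 : (m - a) ≠ 0 := by linarith
          have hne2 : (R - m) ^ k ≠ 0 := ne_of_gt hcpos
          rw [hC₁]
          field_simp
  -- combine everything
  have hBa : (R - a) ^ (k-1) * F a ^ 2 ≤ (R - a) ^ (k-1) * (C₁ * J) :=
    mul_le_mul_of_nonneg_left hFaJ (Real.rpow_nonneg hRa.le _)
  have hhalf : (k-1)/2 * I ≤ ((R - a) ^ (k-1) * C₁ + 2/(k-1)) * J := by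
    nlinarith [hkey2, hAM, hBa]
  calc I = 2/(k-1) * ((k-1)/2 * I) := by field_simp
    _ ≤ 2/(k-1) * (((R - a) ^ (k-1) * C₁ + 2/(k-1)) * J) :=
        mul_le_mul_of_nonneg_left hhalf (by positivity)
    _ = 2/(k-1) * ((R - a) ^ (k-1) * C₁ + 2/(k-1)) * J := by ring
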